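/- (Non-autonomous Hénon–Heiles system: classical Frobenius condition.) For all (t_1, t_2) ∈ ℝ² and all (x_1, x_2, y_1, y_2) with x_2 ≠ 0: ∂H_1/∂t_2 − ∂H_2/∂t_1 + {H_1, H_2} = 0. -/

import Mathlib

noncomputable section

open scoped BigOperators

namespace P3

/-- Partial derivative in the `x_i` direction on phase space `ℝ^{2n}`. -/
def pdq (n : ℕ) (i : Fin n) (f : ((Fin n → ℝ) × (Fin n → ℝ)) → ℝ)
    (z : (Fin n → ℝ) × (Fin n → ℝ)) : ℝ :=
  fderiv ℝ f z (Pi.single i 1, 0)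

/-- Partial derivative in the `y_i` direction on phase space `ℝ^{2n}`. -/
def pdp (n : ℕ) (i : Fin n) (f : ((Fin n → ℝ) × (Fin n → ℝ)) → ℝ)
    (z : (Fin n → ℝ) × (Fin n → ℝ)) : ℝ :=
  fderiv ℝ f z (0, Pi.single i 1)

/-- Canonical Poisson bracket on `ℝ^{2n}`. -/
def pbr (n : ℕ) (f g : ((Fin n → ℝ) × (Fin n → ℝ)) → ℝ)
    (z : (Fin n → ℝ) × (Fin n → ℝ)) : ℝ :=
  ∑ i : Fin n, (pdq n i f z * pdp n i g z - pdp n i f z * pdq n i g z)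

/-- First Hamiltonian of the non-autonomous Hénon–Heiles system (in flat
coordinates `x_1 = z.1 0`, `x_2 = z.1 1`, `y_1 = z.2 0`, `y_2 = z.2 1`). -/
def HH1 (a t1 t2 : ℝ) (z : (Fin 2 → ℝ) × (Fin 2 → ℝ)) : ℝ :=
  (1 / 2) * (z.2 0) ^ 2 + (1 / 2) * (z.2 1) ^ 2 + (z.1 0) ^ 3
    + (1 / 2) * (z.1 0) * (z.1 1) ^ 2 + a * ((z.1 1) ^ 2)⁻¹
    + 3 * t2 * ((z.1 0) ^ 2 + (1 / 4) * (z.1 1) ^ 2) + (t1 + 3 * t2 ^ 2) * (z.1 0)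

/-- Second Hamiltonian of the non-autonomous Hénon–Heiles system. -/
def HH2 (a t1 t2 : ℝ) (z : (Fin 2 → ℝ) × (Fin 2 → ℝ)) : ℝ :=
  (1 / 2) * (z.1 1) * (z.2 0) * (z.2 1) - (1 / 2) * (z.1 0) * (z.2 1) ^ 2 - z.2 0
    + (1 / 16) * (z.1 1) ^ 4 + (1 / 4) * (z.1 0) ^ 2 * (z.1 1) ^ 2
    - a * (z.1 0) * ((z.1 1) ^ 2)⁻¹ + (3 / 4) * t2 * (z.1 0) * (z.1 1) ^ 2
    + (1 / 4) * (t1 + 3 * t2 ^ 2) * (z.1 1) ^ 2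
    - ((1 / 2) * t1 ^ 2 + 3 * t1 * t2 ^ 2)

abbrev Ph := (Fin 2 → ℝ) × (Fin 2 → ℝ)
def cq (i : Fin 2) : Ph →L[ℝ] ℝ :=
  (ContinuousLinearMap.proj i).comp (ContinuousLinearMap.fst ℝ (Fin 2 → ℝ) (Fin 2 → ℝ))
def cp (i : Fin 2) : Ph →L[ℝ] ℝ :=
  (ContinuousLinearMap.proj i).comp (ContinuousLinearMap.snd ℝ (Fin 2 → ℝ) (Fin 2 → ℝ))


lemma hFpow {f : Ph → ℝ} {f' : Ph →L[ℝ] ℝ} {z : Ph} (h : HasFDerivAt f f' z) (n : ℕ) :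
    HasFDerivAt (fun x : Ph => f x ^ n) (((n : ℝ) * f z ^ (n - 1)) • f') z :=
  (hasDerivAt_pow n (f z)).comp_hasFDerivAt z h

lemma hFinv {f : Ph → ℝ} {f' : Ph →L[ℝ] ℝ} {z : Ph} (h : HasFDerivAt f f' z)
    (h0 : f z ≠ 0) :
    HasFDerivAt (fun x : Ph => (f x)⁻¹) ((-((f z) ^ 2)⁻¹) • f') z :=
  (hasDerivAt_inv h0).comp_hasFDerivAt z h

lemma HH1_hasFDerivAt (a t1 t2 : ℝ) (z : Ph) (hz : z.1 1 ≠ 0) :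
    HasFDerivAt (HH1 a t1 t2)
      ((3 * (z.1 0) ^ 2 + (1/2) * (z.1 1) ^ 2 + 6 * t2 * (z.1 0) + (t1 + 3 * t2 ^ 2)) • cq 0
        + ((z.1 0) * (z.1 1) - 2 * a * ((z.1 1) ^ 3)⁻¹ + (3/2) * t2 * (z.1 1)) • cq 1
        + (z.2 0) • cp 0 + (z.2 1) • cp 1) z := by
  have hq0 : HasFDerivAt (fun z : Ph => z.1 0) (cq 0) z := (cq 0).hasFDerivAt
  have hq1 : HasFDerivAt (fun z : Ph => z.1 1) (cq 1) z := (cq 1).hasFDerivAt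
  have hp0 : HasFDerivAt (fun z : Ph => z.2 0) (cp 0) z := (cp 0).hasFDerivAt
  have hp1 : HasFDerivAt (fun z : Ph => z.2 1) (cp 1) z := (cp 1).hasFDerivAt
  have h2 : (z.1 1) ^ 2 ≠ 0 := pow_ne_zero _ hz
  have H := (((((((hFpow hp0 2).const_mul (1/2:ℝ)).add ((hFpow hp1 2).const_mul (1/2:ℝ))).add
      (hFpow hq0 3)).add ((hq0.const_mul (1/2:ℝ)).mul (hFpow hq1 2))).add
      ((hFinv (hFpow hq1 2) h2).const_mul a)).add
      (((hFpow hq0 2).add ((hFpow hq1 2).const_mul (1/4:ℝ))).const_mul (3*t2))).add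
      (hq0.const_mul (t1 + 3*t2^2))
  refine H.congr_fderiv ?_
  refine ContinuousLinearMap.ext fun v => ?_
  simp only [ContinuousLinearMap.add_apply, ContinuousLinearMap.smul_apply, smul_eq_mul,
    ContinuousLinearMap.coe_smul', Pi.smul_apply]
  field_simp
  ring

lemma HH2_hasFDerivAt (a t1 t2 : ℝ) (z : Ph) (hz : z.1 1 ≠ 0) :
    HasFDerivAt (HH2 a t1 t2)
      ((-(1/2) * (z.2 1) ^ 2 + (1/2) * (z.1 0) * (z.1 1) ^ 2 - a * ((z.1 1) ^ 2)⁻¹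
          + (3/4) * t2 * (z.1 1) ^ 2) • cq 0
        + ((1/2) * (z.2 0) * (z.2 1) + (1/4) * (z.1 1) ^ 3 + (1/2) * (z.1 0) ^ 2 * (z.1 1)
          + 2 * a * (z.1 0) * ((z.1 1) ^ 3)⁻¹ + (3/2) * t2 * (z.1 0) * (z.1 1)
          + (1/2) * (t1 + 3 * t2 ^ 2) * (z.1 1)) • cq 1
        + ((1/2) * (z.1 1) * (z.2 1) - 1) • cp 0
        + ((1/2) * (z.1 1) * (z.2 0) - (z.1 0) * (z.2 1)) • cp 1) z := by
  have hq0 : HasFDerivAt (fun z : Ph => z.1 0) (cq 0) z := (cq 0).hasFDerivAt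
  have hq1 : HasFDerivAt (fun z : Ph => z.1 1) (cq 1) z := (cq 1).hasFDerivAt
  have hp0 : HasFDerivAt (fun z : Ph => z.2 0) (cp 0) z := (cp 0).hasFDerivAt
  have hp1 : HasFDerivAt (fun z : Ph => z.2 1) (cp 1) z := (cp 1).hasFDerivAt
  have h2 : (z.1 1) ^ 2 ≠ 0 := pow_ne_zero _ hz
  have A1 := ((hq1.const_mul (1/2:ℝ)).mul hp0).mul hp1
  have A2 := (hq0.const_mul (1/2:ℝ)).mul (hFpow hp1 2)
  have A4 := (hFpow hq1 4).const_mul (1/16:ℝ)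
  have A5 := ((hFpow hq0 2).const_mul (1/4:ℝ)).mul (hFpow hq1 2)
  have A6 := (hq0.const_mul a).mul (hFinv (hFpow hq1 2) h2)
  have A7 := (hq0.const_mul ((3/4:ℝ)*t2)).mul (hFpow hq1 2)
  have A8 := (hFpow hq1 2).const_mul ((1/4:ℝ)*(t1 + 3*t2^2))
  have A9 : HasFDerivAt (fun _ : Ph => (1/2:ℝ)*t1^2 + 3*t1*t2^2) (0 : Ph →L[ℝ] ℝ) z :=
    hasFDerivAt_const _ z
  have H := ((((((((A1.sub A2).sub hp0).add A4).add A5).sub A6).add A7).add A8).sub A9)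
  refine H.congr_fderiv ?_
  refine ContinuousLinearMap.ext fun v => ?_
  simp only [ContinuousLinearMap.add_apply, ContinuousLinearMap.sub_apply,
    ContinuousLinearMap.smul_apply, smul_eq_mul, ContinuousLinearMap.coe_smul',
    Pi.smul_apply, ContinuousLinearMap.zero_apply, Pi.mul_apply]
  field_simp
  ring

lemma deriv_HH1_t2 (a t1 t2 : ℝ) (z : Ph) :
    deriv (fun s => HH1 a t1 s z) t2
      = 3 * ((z.1 0) ^ 2 + (1/4) * (z.1 1) ^ 2) + 6 * t2 * (z.1 0) := by
  have B1 := hasDerivAt_const t2 ((1/2:ℝ) * (z.2 0) ^ 2)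
  have B2 := hasDerivAt_const t2 ((1/2:ℝ) * (z.2 1) ^ 2)
  have B3 := hasDerivAt_const t2 ((z.1 0) ^ 3)
  have B4 := hasDerivAt_const t2 ((1/2:ℝ) * (z.1 0) * (z.1 1) ^ 2)
  have B5 := hasDerivAt_const t2 (a * ((z.1 1) ^ 2)⁻¹)
  have B6 := ((hasDerivAt_id t2).const_mul (3:ℝ)).mul_const ((z.1 0) ^ 2 + (1/4:ℝ) * (z.1 1) ^ 2)
  have B7 := ((hasDerivAt_const t2 t1).add ((hasDerivAt_pow 2 t2).const_mul (3:ℝ))).mul_const (z.1 0)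
  have H := (((((B1.add B2).add B3).add B4).add B5).add B6).add B7
  have H' := H.congr_deriv (g' := 3 * ((z.1 0) ^ 2 + (1/4) * (z.1 1) ^ 2) + 6 * t2 * (z.1 0))
    (by push_cast; ring)
  exact H'.deriv

lemma deriv_HH2_t1 (a t1 t2 : ℝ) (z : Ph) :
    deriv (fun s => HH2 a s t2 z) t1 = (1/4) * (z.1 1) ^ 2 - 3 * t2 ^ 2 - t1 := by
  have C1 := hasDerivAt_const t1 ((1/2:ℝ) * (z.1 1) * (z.2 0) * (z.2 1))
  have C2 := hasDerivAt_const t1 ((1/2:ℝ) * (z.1 0) * (z.2 1) ^ 2)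
  have C3 := hasDerivAt_const t1 (z.2 0)
  have C4 := hasDerivAt_const t1 ((1/16:ℝ) * (z.1 1) ^ 4)
  have C5 := hasDerivAt_const t1 ((1/4:ℝ) * (z.1 0) ^ 2 * (z.1 1) ^ 2)
  have C6 := hasDerivAt_const t1 (a * (z.1 0) * ((z.1 1) ^ 2)⁻¹)
  have C7 := hasDerivAt_const t1 ((3/4:ℝ) * t2 * (z.1 0) * (z.1 1) ^ 2)
  have C8 := (((hasDerivAt_id t1).add_const (3 * t2 ^ 2)).const_mul (1/4:ℝ)).mul_const ((z.1 1) ^ 2)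
  have C9 := ((hasDerivAt_pow 2 t1).const_mul (1/2:ℝ)).add (((hasDerivAt_id t1).const_mul (3:ℝ)).mul_const (t2 ^ 2))
  have H := ((((((((C1.sub C2).sub C3).add C4).add C5).sub C6).add C7).add C8).sub C9)
  have H' := H.congr_deriv (g' := (1/4) * (z.1 1) ^ 2 - 3 * t2 ^ 2 - t1) (by push_cast; ring)
  exact H'.deriv

/-- The non-autonomous Hénon–Heiles Hamiltonians satisfy the
classical Frobenius condition with vanishing right-hand side. -/
theorem henon_heiles_frobenius (a : ℝ) (t1 t2 : ℝ)
    (z : (Fin 2 → ℝ) × (Fin 2 → ℝ)) (hz : z.1 1 ≠ 0) :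
    deriv (fun s => HH1 a t1 s z) t2 - deriv (fun s => HH2 a s t2 z) t1
      + pbr 2 (HH1 a t1 t2) (HH2 a t1 t2) z = 0 := by
  rw [deriv_HH1_t2, deriv_HH2_t1]
  simp only [pbr, pdq, pdp, Fin.sum_univ_two,
    (HH1_hasFDerivAt a t1 t2 z hz).fderiv, (HH2_hasFDerivAt a t1 t2 z hz).fderiv]
  simp only [cq, cp, ContinuousLinearMap.add_apply, ContinuousLinearMap.smul_apply,
    smul_eq_mul, ContinuousLinearMap.coe_comp', Function.comp_apply,
    ContinuousLinearMap.coe_fst', ContinuousLinearMap.coe_snd',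
    ContinuousLinearMap.proj_apply]
  simp [Pi.single_apply]
  field_simp
  ring

end P3
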